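/- Let s > 0 be real. Then there exists a constant C > 0 such that for every positive integer N and every real x > 1, the scaled one-point density satisfies N·ρ_N^s(Nx) ≤ C·x^{−2s−2}. -/

import Mathlib

open MeasureTheory Real Filter

noncomputable section

/-- Pochhammer symbol `(a)_j = a(a+1)⋯(a+j-1)` for complex `a`. -/
def poch (a : ℂ) (j : ℕ) : ℂ := ∏ i ∈ Finset.range j, (a + i)

/-- The monic pseudo-Jacobi polynomial `p_m^{s,N}` (complex-valued formula). -/
def pJC (s : ℝ) (N m : ℕ) (x : ℝ) : ℂ :=
  ∑ j ∈ Finset.range (m + 1),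
    poch (-(m : ℂ)) j * poch ((s : ℂ) + N - m) j /
      (poch (2 * (s : ℂ) + 2 * N - 2 * m) j * (Nat.factorial j : ℂ)) *
    (-2 * Complex.I) ^ j * ((x : ℂ) - Complex.I) ^ (m - j)

/-- The pseudo-Jacobi polynomial as a real-valued function (it has real values
for real `s` and real `x`). -/
def pJ (s : ℝ) (N m : ℕ) (x : ℝ) : ℝ := (pJC s N m x).re

/-- The pseudo-Jacobi weight `φ_N^s(x) = (1+x²)^{-(N+s)}`. -/
def phi (s : ℝ) (N : ℕ) (x : ℝ) : ℝ := (1 + x ^ 2) ^ (-((N : ℝ) + s))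

/-- The normalizing constant `γ²_{N-1,s}`. -/
def gammaSq (s : ℝ) (N : ℕ) : ℝ :=
  (2 : ℝ) ^ (2 * s) / Real.pi * Real.Gamma (2 * s + N + 1) * Real.Gamma (s + 1) ^ 2 /
    (Real.Gamma N * Real.Gamma (2 * s + 1) * Real.Gamma (2 * s + 2))

/-- The one-point density of the generalized Cauchy (Hua–Pickrell) ensemble. -/
def rho (s : ℝ) (N : ℕ) (x : ℝ) : ℝ :=
  gammaSq s N * phi s N x *
    (pJ s N (N - 1) x * deriv (pJ s N N) x - pJ s N N x * deriv (pJ s N (N - 1)) x)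

/-- The sum of moments `Q(k;s,N) = ∫_ℝ |x|^{2k}(1+x²)ρ_N^s(x) dx`,
with `|x|^{2k} = exp(2k log|x|)`. -/
def Qmom (k : ℂ) (s : ℝ) (N : ℕ) : ℂ :=
  ∫ x : ℝ, Complex.exp (2 * k * Real.log |x|) * (((1 + x ^ 2) * rho s N x : ℝ) : ℂ)

/-- `J(k;s,N) = Q(k;s,N)/(Γ(k+1/2)Γ(s-k-1/2))`. -/
def Jmom (k : ℂ) (s : ℝ) (N : ℕ) : ℂ :=
  Qmom k s N / (Complex.Gamma (k + 1 / 2) * Complex.Gamma ((s : ℂ) - k - 1 / 2))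

/-- The continuous-Hahn polynomial `S_n(x;a,b,c,d)`. -/
def contHahn (n : ℕ) (x a b c d : ℂ) : ℂ :=
  Complex.I ^ n * (poch (a + c) n * poch (a + d) n / (Nat.factorial n : ℂ)) *
    ∑ j ∈ Finset.range (n + 1),
      poch (-(n : ℂ)) j * poch (n + a + b + c + d - 1) j * poch (a + Complex.I * x) j /
        (poch (a + c) j * poch (a + d) j * (Nat.factorial j : ℂ))

end


noncomputable section
open Complex Finset

def K (s : ℝ) (N m : ℕ) (j : ℕ) : ℂ :=
  poch (-(m : ℂ)) j * poch ((s : ℂ) + N - m) j /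
      (poch (2 * (s : ℂ) + 2 * N - 2 * m) j * (Nat.factorial j : ℂ)) *
    (-2 * Complex.I) ^ j

lemma poch_ofReal (r : ℝ) (j : ℕ) :
    poch ((r : ℝ) : ℂ) j = ((∏ i ∈ Finset.range j, (r + i) : ℝ) : ℂ) := by
  unfold poch; push_cast; rfl

lemma norm_K_le (s : ℝ) (hs : 0 < s) (N m j : ℕ) (hm : m ≤ N) (hj : j ≤ m) :
    ‖K s N m j‖ ≤ (2 * (N : ℝ)) ^ j / (Nat.factorial j) := by
  have hmN : (m:ℝ) ≤ N := by exact_mod_cast hm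
  have ha : (0:ℝ) < s + N - m := by linarith
  set a : ℝ := s + N - m with ha_def
  have h1 : poch ((s : ℂ) + N - m) j = ((∏ i ∈ Finset.range j, (a + i) : ℝ) : ℂ) := by
    rw [← poch_ofReal]; congr 1; push_cast [ha_def]; ring
  have h2 : poch (2 * (s : ℂ) + 2 * N - 2 * m) j
      = ((∏ i ∈ Finset.range j, (2 * a + i) : ℝ) : ℂ) := by
    rw [← poch_ofReal]; congr 1; push_cast [ha_def]; ring
  have h3 : poch (-(m : ℂ)) j = ((∏ i ∈ Finset.range j, (-(m:ℝ) + i) : ℝ) : ℂ) := by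
    rw [← poch_ofReal]; congr 1; push_cast; ring
  have hP2pos : (0:ℝ) < ∏ i ∈ Finset.range j, (a + i) :=
    Finset.prod_pos fun i _ => by positivity
  have hP3pos : (0:ℝ) < ∏ i ∈ Finset.range j, (2*a + i) :=
    Finset.prod_pos fun i _ => by positivity
  have hP23 : (∏ i ∈ Finset.range j, (a + i)) ≤ ∏ i ∈ Finset.range j, (2*a + i) :=
    Finset.prod_le_prod (fun i _ => by positivity) (fun i _ => by linarith)
  have hP1 : |∏ i ∈ Finset.range j, (-(m:ℝ) + i)| ≤ (N:ℝ)^j := by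
    rw [Finset.abs_prod]
    calc ∏ i ∈ Finset.range j, |(-(m:ℝ) + i)|
        ≤ ∏ _i ∈ Finset.range j, (N:ℝ) := by
          refine Finset.prod_le_prod (fun i _ => abs_nonneg _) (fun i hi => ?_)
          rw [Finset.mem_range] at hi
          have hi' : (i:ℝ) ≤ m := by exact_mod_cast (hi.le.trans hj)
          rw [abs_le]; constructor <;> [linarith; linarith [(Nat.cast_nonneg i : (0:ℝ) ≤ i)]]
      _ = (N:ℝ)^j := by rw [Finset.prod_const, Finset.card_range]
  have hnorm : ‖K s N m j‖ = |∏ i ∈ Finset.range j, (-(m:ℝ) + i)| *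
      (∏ i ∈ Finset.range j, (a + i)) / ((∏ i ∈ Finset.range j, (2*a + i)) * (Nat.factorial j)) * 2^j := by
    have e2I : ‖(-2*Complex.I)‖ = 2 := by simp
    rw [K, h1, h2, h3]
    simp only [norm_mul, norm_div, norm_pow, Complex.norm_real, Complex.norm_natCast,
      Real.norm_eq_abs, e2I]
    rw [abs_of_pos hP2pos, abs_of_pos hP3pos]
  rw [hnorm]
  have hNj : |∏ i ∈ Finset.range j, (-(m:ℝ) + i)| * (∏ i ∈ Finset.range j, (a + i)) /
      ((∏ i ∈ Finset.range j, (2*a + i)) * (Nat.factorial j)) * 2^j ≤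
      (N:ℝ)^j * (∏ i ∈ Finset.range j, (2*a + i)) /
      ((∏ i ∈ Finset.range j, (2*a + i)) * (Nat.factorial j)) * 2^j := by
    gcongr
  refine hNj.trans (le_of_eq ?_)
  have hf : (0:ℝ) < (Nat.factorial j : ℝ) := by positivity
  field_simp
  ring

lemma pJC_eq (s : ℝ) (N m : ℕ) (x : ℝ) :
    pJC s N m x = ∑ j ∈ Finset.range (m+1), K s N m j * ((x:ℂ) - Complex.I) ^ (m - j) := rfl

lemma hasDerivAt_pJ (s : ℝ) (N m : ℕ) (y : ℝ) :
    HasDerivAt (pJ s N m)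
      ((∑ j ∈ Finset.range (m+1),
        K s N m j * ((m - j : ℕ) : ℂ) * ((y:ℂ) - Complex.I) ^ (m - j - 1)).re) y := by
  have hC : HasDerivAt (fun x : ℝ => pJC s N m x)
      (∑ j ∈ Finset.range (m+1),
        K s N m j * ((m - j : ℕ) : ℂ) * ((y:ℂ) - Complex.I) ^ (m - j - 1)) y := by
    simp only [pJC_eq]
    refine HasDerivAt.fun_sum fun j _ => ?_
    have h1 : HasDerivAt (fun z : ℂ => K s N m j * (z - Complex.I) ^ (m - j))
        (K s N m j * (((m - j : ℕ) : ℂ) * ((y:ℂ) - Complex.I) ^ (m - j - 1) * 1)) ((y:ℝ) : ℂ) :=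
      (((hasDerivAt_id ((y:ℝ):ℂ)).sub_const Complex.I).pow (m - j)).const_mul _
    have h2 := h1.comp_ofReal
    simpa [mul_assoc] using h2
  have := Complex.reCLM.hasFDerivAt.comp_hasDerivAt y hC
  exact this


lemma case_finish (Nr t c C : ℝ) (e f g : ℕ) (h0 : 0 ≤ Nr) (htN : Nr ≤ t)
    (ht1 : 1 ≤ t) (hc : 0 ≤ c) (hcC : c ≤ C) (hef : e + f = g) :
    c * t ^ e * Nr ^ f ≤ C * t ^ g := by
  have ht0 : (0:ℝ) ≤ t := by linarith
  calc c * t^e * Nr^f ≤ C * t^e * t^f := by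
        have hC : 0 ≤ C := le_trans hc hcC
        have := pow_le_pow_left₀ h0 htN f
        gcongr
    _ = C * t^g := by rw [mul_assoc, ← pow_add, hef]

lemma norm_nat_cast_sub_le (N j l : ℕ) (hj : 1 + j ≤ N) (hl : l ≤ N) :
    ‖((N-l : ℕ) : ℂ) - ((N-1-j : ℕ) : ℂ)‖ ≤ (1:ℝ) + j + l := by
  have h : ((N-l:ℕ):ℂ) - ((N-1-j:ℕ):ℂ) = ((((N-l:ℕ):ℝ) - ((N-1-j:ℕ):ℝ) : ℝ):ℂ) := by
    push_cast; ring
  rw [h, Complex.norm_real, Real.norm_eq_abs]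
  have e1 : ((N-l:ℕ):ℝ) = (N:ℝ) - l := by rw [Nat.cast_sub hl]
  have e2 : ((N-1-j:ℕ):ℝ) = (N:ℝ) - 1 - j := by
    rw [(by omega : N-1-j = N - (1+j)), Nat.cast_sub (by omega)]; push_cast; ring
  rw [e1, e2, abs_le]
  have hj0 : (0:ℝ) ≤ j := Nat.cast_nonneg j
  have hl0 : (0:ℝ) ≤ l := Nat.cast_nonneg l
  constructor <;> linarith

lemma E1_bound (N j l : ℕ) (hN : 1 ≤ N) (hj : j < N) (hl : l < N + 1)
    (u : ℂ) (t : ℝ) (ht : ‖u‖ = t) (htN : (N:ℝ) ≤ t) (ht1 : 1 ≤ t) :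
    ‖((N - l : ℕ) : ℂ) * (u ^ (N - 1 - j) * u ^ (N - l - 1))
      - ((N - 1 - j : ℕ) : ℂ) * (u ^ (N - l) * u ^ (N - 1 - j - 1))‖ * (N:ℝ)^(j+l)
      ≤ ((3:ℝ) + j + l) * t ^ (2*N - 2) := by
  have hN0 : (0:ℝ) ≤ N := Nat.cast_nonneg N
  have hjl3 : (0:ℝ) ≤ 3 + j + l := by positivity
  rcases Nat.lt_or_ge l N with hlN | hlN
  · rcases Nat.lt_or_ge j (N-1) with hjN | hjN
    · -- generic case
      have he1 : (N-1-j) + (N-l-1) = 2*N-2-j-l := by omega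
      have he2 : (N-l) + (N-1-j-1) = 2*N-2-j-l := by omega
      have hcomb : ((N - l : ℕ) : ℂ) * (u ^ (N - 1 - j) * u ^ (N - l - 1))
          - ((N - 1 - j : ℕ) : ℂ) * (u ^ (N - l) * u ^ (N - 1 - j - 1))
          = (((N - l : ℕ) : ℂ) - ((N - 1 - j : ℕ) : ℂ)) * u ^ (2*N-2-j-l) := by
        rw [← pow_add, ← pow_add, he1, he2]; ring
      rw [hcomb, norm_mul, norm_pow, ht]
      refine case_finish (N:ℝ) t _ _ _ (j+l) (2*N-2) hN0 htN ht1 (by positivity) ?_ (by omega)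
      calc ‖((N-l : ℕ) : ℂ) - ((N-1-j : ℕ) : ℂ)‖ ≤ (1:ℝ) + j + l :=
            norm_nat_cast_sub_le N j l (by omega) (by omega)
        _ ≤ 3 + j + l := by linarith
    · -- j = N-1
      have hj' : j = N - 1 := by omega
      have hz : (N - 1 - j : ℕ) = 0 := by omega
      have h0 : (N - 1 - j : ℕ) = 0 ∧ (N-1-j) = 0 := ⟨hz, hz⟩
      rw [hz]
      simp only [Nat.cast_zero, zero_mul, sub_zero, pow_zero, one_mul]
      rw [norm_mul, norm_pow, ht, Complex.norm_natCast]
      refine case_finish (N:ℝ) t _ _ _ (j+l) (2*N-2) hN0 htN ht1 (by positivity) ?_ (by omega)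
      have : ((N - l : ℕ):ℝ) ≤ (N:ℝ) := by exact_mod_cast Nat.cast_le.mpr (Nat.sub_le N l)
      have hNj : (N:ℝ) = 1 + (j:ℝ) := by
        rw [hj']; push_cast [Nat.cast_sub hN]; ring
      have hl0 : (0:ℝ) ≤ l := Nat.cast_nonneg l
      linarith
  · -- l = N
    have hz : (N - l : ℕ) = 0 := by omega
    rw [hz]
    simp only [Nat.cast_zero, zero_mul, zero_sub, norm_neg]
    rcases Nat.lt_or_ge j (N-1) with hjN | hjN
    · rw [norm_mul, norm_mul, norm_pow, norm_pow, ht, Complex.norm_natCast, pow_zero,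
        one_mul]
      refine case_finish (N:ℝ) t _ _ _ (j+l) (2*N-2) hN0 htN ht1 (by positivity) ?_ (by omega)
      have h1 : ((N - 1 - j : ℕ):ℝ) ≤ (N:ℝ) := Nat.cast_le.mpr (by omega)
      have h2 : (N:ℝ) ≤ (l:ℝ) := Nat.cast_le.mpr hlN
      have hj0 : (0:ℝ) ≤ j := Nat.cast_nonneg j
      linarith
    · -- j = N-1 : everything zero
      have hz2 : (N - 1 - j : ℕ) = 0 := by omega
      rw [hz2]
      simp only [Nat.cast_zero, zero_mul, norm_zero]
      positivity


lemma E2_bound (N j l : ℕ) (hN : 1 ≤ N) (hj : j < N) (hl : l < N + 1)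
    (y t : ℝ) (htN : (N:ℝ) ≤ t) (ht1 : 1 ≤ t)
    (hu : ‖((y:ℂ) - Complex.I)‖ = t) (hv : ‖((y:ℂ) + Complex.I)‖ = t) (hyt : |y| ≤ t) :
    ‖((N - l : ℕ) : ℂ) * (((y:ℂ) - Complex.I) ^ (N - 1 - j) * ((y:ℂ) + Complex.I) ^ (N - l - 1))
      - ((N - 1 - j : ℕ) : ℂ) *
        (((y:ℂ) + Complex.I) ^ (N - l) * ((y:ℂ) - Complex.I) ^ (N - 1 - j - 1))‖ * (N:ℝ)^(j+l)
      ≤ ((3:ℝ) + j + l) * t ^ (2*N - 2) := by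
  have hN0 : (0:ℝ) ≤ N := Nat.cast_nonneg N
  have ht0 : (0:ℝ) ≤ t := by linarith
  have hjl3 : (0:ℝ) ≤ 3 + j + l := by positivity
  have hj0 : (0:ℝ) ≤ j := Nat.cast_nonneg j
  have hl0 : (0:ℝ) ≤ l := Nat.cast_nonneg l
  rcases Nat.lt_or_ge l N with hlN | hlN
  · rcases Nat.lt_or_ge j (N-1) with hjN | hjN
    · -- generic case
      have p1 : ((y:ℂ) - Complex.I)^(N-1-j) = ((y:ℂ) - Complex.I)^(N-2-j) * ((y:ℂ) - Complex.I) := by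
        rw [← pow_succ]; congr 1; omega
      have p2 : ((y:ℂ) + Complex.I)^(N-l) = ((y:ℂ) + Complex.I)^(N-1-l) * ((y:ℂ) + Complex.I) := by
        rw [← pow_succ]; congr 1; omega
      have p3 : ((y:ℂ) - Complex.I)^(N-1-j-1) = ((y:ℂ) - Complex.I)^(N-2-j) := by congr 1; omega
      have hfac : ((N - l : ℕ) : ℂ) * (((y:ℂ) - Complex.I) ^ (N - 1 - j) * ((y:ℂ) + Complex.I) ^ (N - l - 1))
          - ((N - 1 - j : ℕ) : ℂ) * (((y:ℂ) + Complex.I) ^ (N - l) * ((y:ℂ) - Complex.I) ^ (N - 1 - j - 1))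
          = ((y:ℂ) - Complex.I)^(N-2-j) * ((y:ℂ) + Complex.I)^(N-l-1) *
            (((N - l : ℕ) : ℂ) * ((y:ℂ) - Complex.I) - ((N - 1 - j : ℕ) : ℂ) * ((y:ℂ) + Complex.I)) := by
        rw [p1, p2, p3, (by omega : N-1-l = N-l-1)]; ring
      have hg : ‖((N - l : ℕ) : ℂ) * ((y:ℂ) - Complex.I) - ((N - 1 - j : ℕ) : ℂ) * ((y:ℂ) + Complex.I)‖
          ≤ ((1:ℝ) + j + l) * t + 2 * N := by
        have hgid : ((N - l : ℕ) : ℂ) * ((y:ℂ) - Complex.I) - ((N - 1 - j : ℕ) : ℂ) * ((y:ℂ) + Complex.I)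
            = (((N - l : ℕ) : ℂ) - ((N - 1 - j : ℕ) : ℂ)) * (y:ℂ)
              - (((N - l : ℕ) + (N - 1 - j : ℕ) : ℕ) : ℂ) * Complex.I := by
          push_cast; ring
        rw [hgid]
        calc ‖(((N - l : ℕ) : ℂ) - ((N - 1 - j : ℕ) : ℂ)) * (y:ℂ)
              - (((N - l : ℕ) + (N - 1 - j : ℕ) : ℕ) : ℂ) * Complex.I‖
            ≤ ‖(((N - l : ℕ) : ℂ) - ((N - 1 - j : ℕ) : ℂ)) * (y:ℂ)‖
              + ‖(((N - l : ℕ) + (N - 1 - j : ℕ) : ℕ) : ℂ) * Complex.I‖ := norm_sub_le _ _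
          _ ≤ ((1:ℝ) + j + l) * t + 2 * N := by
              rw [norm_mul, norm_mul, Complex.norm_I, mul_one, Complex.norm_natCast,
                Complex.norm_real, Real.norm_eq_abs]
              have h1 := norm_nat_cast_sub_le N j l (by omega) (by omega)
              have h2 : (((N - l : ℕ) + (N - 1 - j : ℕ) : ℕ) : ℝ) ≤ 2 * N := by
                have : (N - l : ℕ) + (N - 1 - j : ℕ) ≤ 2 * N := by omega
                exact_mod_cast this
              have hy0 : 0 ≤ |y| := abs_nonneg y
              have h1' : (0:ℝ) ≤ 1 + j + l := by positivity
              nlinarith [mul_le_mul h1 hyt hy0 h1']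
      calc ‖_ - _‖ * (N:ℝ)^(j+l)
          = t^(N-2-j) * t^(N-l-1) *
              ‖((N - l : ℕ) : ℂ) * ((y:ℂ) - Complex.I) - ((N - 1 - j : ℕ) : ℂ) * ((y:ℂ) + Complex.I)‖
              * (N:ℝ)^(j+l) := by
            rw [hfac, norm_mul, norm_mul, norm_pow, norm_pow, hu, hv]
        _ ≤ t^(N-2-j) * t^(N-l-1) * (((1:ℝ) + j + l) * t + 2 * N) * (N:ℝ)^(j+l) := by gcongr
        _ = ((1:ℝ)+j+l) * t^((N-2-j)+(N-l-1)+1) * (N:ℝ)^(j+l)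
            + 2 * t^((N-2-j)+(N-l-1)) * (N:ℝ)^((j+l)+1) := by ring
        _ ≤ ((1:ℝ)+j+l) * t^(2*N-2) + 2 * t^(2*N-2) := by
            refine add_le_add
              (case_finish (N:ℝ) t _ _ _ (j+l) (2*N-2) hN0 htN ht1 (by positivity) le_rfl (by omega))
              (case_finish (N:ℝ) t _ _ _ ((j+l)+1) (2*N-2) hN0 htN ht1 (by positivity) le_rfl (by omega))
        _ = ((3:ℝ) + j + l) * t ^ (2*N - 2) := by ring
    · -- j = N-1
      have hz : (N - 1 - j : ℕ) = 0 := by omega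
      rw [hz]
      simp only [Nat.cast_zero, zero_mul, sub_zero, pow_zero, one_mul]
      rw [norm_mul, norm_pow, hv, Complex.norm_natCast]
      refine case_finish (N:ℝ) t _ _ _ (j+l) (2*N-2) hN0 htN ht1 (by positivity) ?_ (by omega)
      have h1 : ((N - l : ℕ):ℝ) ≤ (N:ℝ) := Nat.cast_le.mpr (Nat.sub_le N l)
      have hNj : (N:ℝ) = 1 + (j:ℝ) := by
        rw [(by omega : N = 1 + j)]; push_cast; ring
      linarith
  · -- l = N
    have hz : (N - l : ℕ) = 0 := by omega
    rw [hz]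
    simp only [Nat.cast_zero, zero_mul, zero_sub, norm_neg, pow_zero, one_mul]
    rcases Nat.lt_or_ge j (N-1) with hjN | hjN
    · rw [norm_mul, norm_pow, hu, Complex.norm_natCast]
      refine case_finish (N:ℝ) t _ _ _ (j+l) (2*N-2) hN0 htN ht1 (by positivity) ?_ (by omega)
      have h1 : ((N - 1 - j : ℕ):ℝ) ≤ (N:ℝ) := Nat.cast_le.mpr (by omega)
      have h2 : (N:ℝ) ≤ (l:ℝ) := Nat.cast_le.mpr hlN
      linarith
    · have hz2 : (N - 1 - j : ℕ) = 0 := by omega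
      rw [hz2]
      simp only [Nat.cast_zero, zero_mul, norm_zero]
      positivity


lemma re_mul_re (a b : ℂ) : a.re * b.re = ((a*b).re + (a * (starRingEnd ℂ) b).re)/2 := by
  rw [Complex.mul_re, Complex.mul_re, Complex.conj_re, Complex.conj_im]; ring

lemma sum_exp4 (n : ℕ) : ∑ i ∈ Finset.range n, (4:ℝ)^i / (Nat.factorial i) ≤ Real.exp 4 :=
  Real.sum_le_exp_of_nonneg (by norm_num) n

lemma term_bound (N j l : ℕ) (hN : 1 ≤ N) (t : ℝ) (ht0 : 0 ≤ t)
    (a b E : ℂ) (ha : ‖a‖ ≤ (2*(N:ℝ))^j / (Nat.factorial j))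
    (hb : ‖b‖ ≤ (2*(N:ℝ))^l / (Nat.factorial l))
    (hE : ‖E‖ * (N:ℝ)^(j+l) ≤ ((3:ℝ) + j + l) * t ^ (2*N-2)) :
    ‖a * b * E‖ ≤ 3 * ((4:ℝ)^j / (Nat.factorial j)) * ((4:ℝ)^l / (Nat.factorial l)) * t^(2*N-2) := by
  have hNpos : (0:ℝ) < (N:ℝ) := by exact_mod_cast hN
  have hNjl : (0:ℝ) < (N:ℝ)^(j+l) := by positivity
  have hE' : ‖E‖ ≤ ((3:ℝ) + j + l) * t ^ (2*N-2) / (N:ℝ)^(j+l) :=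
    (le_div_iff₀ hNjl).mpr hE
  have h1 : ‖a * b * E‖ ≤ ((2*(N:ℝ))^j / (Nat.factorial j)) * ((2*(N:ℝ))^l / (Nat.factorial l)) *
      (((3:ℝ) + j + l) * t ^ (2*N-2) / (N:ℝ)^(j+l)) := by
    rw [norm_mul, norm_mul]
    gcongr
  refine h1.trans ?_
  have hfj : (0:ℝ) < (Nat.factorial j : ℝ) := by positivity
  have hfl : (0:ℝ) < (Nat.factorial l : ℝ) := by positivity
  have h2j : (1:ℝ) + j ≤ (2:ℝ)^j := by
    have := (Nat.lt_two_pow_self (n := j))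
    have : (j:ℝ) + 1 ≤ (2:ℝ)^j := by exact_mod_cast Nat.succ_le_of_lt (Nat.lt_two_pow_self (n := j))
    linarith
  have h2l : (1:ℝ) + l ≤ (2:ℝ)^l := by
    have : (l:ℝ) + 1 ≤ (2:ℝ)^l := by exact_mod_cast Nat.succ_le_of_lt (Nat.lt_two_pow_self (n := l))
    linarith
  have hj0 : (0:ℝ) ≤ j := Nat.cast_nonneg j
  have hl0 : (0:ℝ) ≤ l := Nat.cast_nonneg l
  have hjl : ((3:ℝ) + j + l) ≤ 3 * (2:ℝ)^j * (2:ℝ)^l := by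
    nlinarith
  have ht2 : (0:ℝ) ≤ t ^ (2*N-2) := by positivity
  calc (2*(N:ℝ))^j / (Nat.factorial j) * ((2*(N:ℝ))^l / (Nat.factorial l)) *
      (((3:ℝ) + j + l) * t ^ (2*N-2) / (N:ℝ)^(j+l))
      = ((3:ℝ) + j + l) * ((2:ℝ)^j / (Nat.factorial j)) * ((2:ℝ)^l / (Nat.factorial l)) * t^(2*N-2) := by
        have hNj' : ((N:ℝ)^j) ≠ 0 := by positivity
        have hNl' : ((N:ℝ)^l) ≠ 0 := by positivity
        rw [mul_pow, mul_pow, pow_add]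
        field_simp
    _ ≤ 3 * (2:ℝ)^j * (2:ℝ)^l * ((2:ℝ)^j / (Nat.factorial j)) * ((2:ℝ)^l / (Nat.factorial l)) * t^(2*N-2) := by
        gcongr
    _ = 3 * ((4:ℝ)^j / (Nat.factorial j)) * ((4:ℝ)^l / (Nat.factorial l)) * t^(2*N-2) := by
        rw [(by norm_num : (4:ℝ) = 2*2), mul_pow, mul_pow]
        ring

lemma bracket_bound (s : ℝ) (hs : 0 < s) (N : ℕ) (hN : 1 ≤ N) (y : ℝ) (hy : (N:ℝ) ≤ y) :
    pJ s N (N-1) y * deriv (pJ s N N) y - pJ s N N y * deriv (pJ s N (N-1)) y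
      ≤ 3 * Real.exp 8 * ((1 + y^2) : ℝ)^(N-1) := by
  have hy1 : (1:ℝ) ≤ y := le_trans (by exact_mod_cast hN) hy
  set t := ‖((y:ℂ) - Complex.I)‖ with ht_def
  have hu : ‖((y:ℂ) - Complex.I)‖ = t := rfl
  have hconj_u : (starRingEnd ℂ) ((y:ℂ) - Complex.I) = (y:ℂ) + Complex.I := by
    rw [map_sub, Complex.conj_ofReal, Complex.conj_I, sub_neg_eq_add]
  have hv : ‖((y:ℂ) + Complex.I)‖ = t := by
    rw [← hconj_u, RCLike.norm_conj]
  have ht2 : t^2 = 1 + y^2 := by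
    rw [ht_def, Complex.sq_norm, Complex.normSq_apply]
    simp [Complex.sub_re, Complex.sub_im]
    ring
  have hyt : |y| ≤ t := by
    have := Complex.abs_re_le_norm ((y:ℂ) - Complex.I)
    simpa [Complex.sub_re, ht_def] using this
  have htN : (N:ℝ) ≤ t := le_trans hy (le_trans (le_abs_self y) hyt)
  have ht1 : (1:ℝ) ≤ t := le_trans (by exact_mod_cast hN) htN
  have ht0 : (0:ℝ) ≤ t := by linarith
  -- notation
  set u : ℂ := (y:ℂ) - Complex.I with hu_def
  set v : ℂ := (y:ℂ) + Complex.I with hv_def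
  set A : ℂ := ∑ j ∈ Finset.range (N-1+1), K s N (N-1) j * u^(N-1 - j) with hA
  set B : ℂ := ∑ l ∈ Finset.range (N+1), K s N N l * u^(N - l) with hB
  set dA : ℂ := ∑ j ∈ Finset.range (N-1+1),
      K s N (N-1) j * ((N-1 - j : ℕ):ℂ) * u^(N-1-j-1) with hdA_def
  set dB : ℂ := ∑ l ∈ Finset.range (N+1),
      K s N N l * ((N - l : ℕ):ℂ) * u^(N-l-1) with hdB_def
  have hvalA : pJ s N (N-1) y = A.re := by rw [pJ, pJC_eq]
  have hvalB : pJ s N N y = B.re := by rw [pJ, pJC_eq]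
  have hderA : deriv (pJ s N (N-1)) y = dA.re := (hasDerivAt_pJ s N (N-1) y).deriv
  have hderB : deriv (pJ s N N) y = dB.re := (hasDerivAt_pJ s N N y).deriv
  rw [hvalA, hvalB, hderA, hderB]
  -- split into holomorphic + mixed parts
  have hBconj : (B * (starRingEnd ℂ) dA).re = ((starRingEnd ℂ) B * dA).re := by
    have : (starRingEnd ℂ) (B * (starRingEnd ℂ) dA) = (starRingEnd ℂ) B * dA := by
      rw [map_mul, RingHomCompTriple.comp_apply]
      simp
    rw [← Complex.conj_re (B * (starRingEnd ℂ) dA), this]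
  have key : A.re * dB.re - B.re * dA.re
      = ((A*dB - B*dA).re + (A * (starRingEnd ℂ) dB - (starRingEnd ℂ) B * dA).re)/2 := by
    rw [re_mul_re A dB, re_mul_re B dA, Complex.sub_re, Complex.sub_re, hBconj]
    ring
  rw [key]
  -- expansion of the holomorphic Wronskian
  have expand1 : A*dB - B*dA = ∑ j ∈ Finset.range (N-1+1), ∑ l ∈ Finset.range (N+1),
      K s N (N-1) j * K s N N l *
        (((N - l : ℕ) : ℂ) * (u ^ (N - 1 - j) * u ^ (N - l - 1))
          - ((N - 1 - j : ℕ) : ℂ) * (u ^ (N - l) * u ^ (N - 1 - j - 1))) := by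
    rw [hA, hB, hdA_def, hdB_def, Finset.sum_mul_sum, Finset.sum_mul_sum,
      Finset.sum_comm (s := Finset.range (N+1)), ← Finset.sum_sub_distrib]
    refine Finset.sum_congr rfl fun j _ => ?_
    rw [← Finset.sum_sub_distrib]
    refine Finset.sum_congr rfl fun l _ => ?_
    ring
  -- expansion of the mixed part
  have hconjdB : (starRingEnd ℂ) dB = ∑ l ∈ Finset.range (N+1),
      (starRingEnd ℂ) (K s N N l) * ((N - l : ℕ):ℂ) * v^(N-l-1) := by
    rw [hdB_def, map_sum]
    refine Finset.sum_congr rfl fun l _ => ?_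
    rw [map_mul, map_mul, map_pow, hconj_u, map_natCast]
  have hconjB : (starRingEnd ℂ) B = ∑ l ∈ Finset.range (N+1),
      (starRingEnd ℂ) (K s N N l) * v^(N-l) := by
    rw [hB, map_sum]
    refine Finset.sum_congr rfl fun l _ => ?_
    rw [map_mul, map_pow, hconj_u]
  have expand2 : A * (starRingEnd ℂ) dB - (starRingEnd ℂ) B * dA
      = ∑ j ∈ Finset.range (N-1+1), ∑ l ∈ Finset.range (N+1),
      K s N (N-1) j * (starRingEnd ℂ) (K s N N l) *
        (((N - l : ℕ) : ℂ) * (u ^ (N - 1 - j) * v ^ (N - l - 1))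
          - ((N - 1 - j : ℕ) : ℂ) * (v ^ (N - l) * u ^ (N - 1 - j - 1))) := by
    rw [hA, hdA_def, hconjdB, hconjB, Finset.sum_mul_sum, Finset.sum_mul_sum,
      Finset.sum_comm (s := Finset.range (N+1)), ← Finset.sum_sub_distrib]
    refine Finset.sum_congr rfl fun j _ => ?_
    rw [← Finset.sum_sub_distrib]
    refine Finset.sum_congr rfl fun l _ => ?_
    ring
  -- bound the two parts
  have S4 : ∀ n : ℕ, ∑ i ∈ Finset.range n, (4:ℝ)^i / (Nat.factorial i) ≤ Real.exp 4 := sum_exp4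
  have hsum_bound : ∀ (W : ℂ),
      (W = ∑ j ∈ Finset.range (N-1+1), ∑ l ∈ Finset.range (N+1),
        (fun j l => K s N (N-1) j * (if True then K s N N l else 0)) j l * 0) → True := fun _ _ => trivial
  have hpart : ∀ (F : ℕ → ℕ → ℂ),
      (∀ j l, j ∈ Finset.range (N-1+1) → l ∈ Finset.range (N+1) →
        ‖F j l‖ ≤ 3 * ((4:ℝ)^j / (Nat.factorial j)) * ((4:ℝ)^l / (Nat.factorial l)) * t^(2*N-2)) →
      ‖∑ j ∈ Finset.range (N-1+1), ∑ l ∈ Finset.range (N+1), F j l‖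
        ≤ 3 * Real.exp 4 * Real.exp 4 * t^(2*N-2) := by
    intro F hF
    have ht2' : (0:ℝ) ≤ t^(2*N-2) := by positivity
    calc ‖∑ j ∈ Finset.range (N-1+1), ∑ l ∈ Finset.range (N+1), F j l‖
        ≤ ∑ j ∈ Finset.range (N-1+1), ‖∑ l ∈ Finset.range (N+1), F j l‖ := norm_sum_le _ _
      _ ≤ ∑ j ∈ Finset.range (N-1+1), ∑ l ∈ Finset.range (N+1), ‖F j l‖ :=
          Finset.sum_le_sum fun j _ => norm_sum_le _ _
      _ ≤ ∑ j ∈ Finset.range (N-1+1), ∑ l ∈ Finset.range (N+1),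
            3 * ((4:ℝ)^j / (Nat.factorial j)) * ((4:ℝ)^l / (Nat.factorial l)) * t^(2*N-2) :=
          Finset.sum_le_sum fun j hj => Finset.sum_le_sum fun l hl => hF j l hj hl
      _ = 3 * ((∑ j ∈ Finset.range (N-1+1), (4:ℝ)^j / (Nat.factorial j)) *
            (∑ l ∈ Finset.range (N+1), (4:ℝ)^l / (Nat.factorial l))) * t^(2*N-2) := by
          rw [Finset.sum_mul_sum]
          rw [Finset.mul_sum, Finset.sum_mul]
          refine Finset.sum_congr rfl fun j _ => ?_
          rw [Finset.mul_sum, Finset.sum_mul]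
          refine Finset.sum_congr rfl fun l _ => ?_
          ring
      _ ≤ 3 * (Real.exp 4 * Real.exp 4) * t^(2*N-2) := by
          have h1 := S4 (N-1+1)
          have h2 := S4 (N+1)
          have hp1 : (0:ℝ) ≤ ∑ j ∈ Finset.range (N-1+1), (4:ℝ)^j / (Nat.factorial j) :=
            Finset.sum_nonneg fun j _ => by positivity
          have hp2 : (0:ℝ) ≤ ∑ l ∈ Finset.range (N+1), (4:ℝ)^l / (Nat.factorial l) :=
            Finset.sum_nonneg fun l _ => by positivity
          gcongr
      _ = 3 * Real.exp 4 * Real.exp 4 * t^(2*N-2) := by ring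
  have claim1 : ‖A*dB - B*dA‖ ≤ 3 * Real.exp 4 * Real.exp 4 * t^(2*N-2) := by
    rw [expand1]
    refine hpart _ fun j l hj hl => ?_
    rw [Finset.mem_range] at hj hl
    exact term_bound N j l hN t ht0 _ _ _
      (norm_K_le s hs N (N-1) j (Nat.sub_le N 1) (by omega))
      (norm_K_le s hs N N l (le_refl N) (by omega))
      (E1_bound N j l hN (by omega) (by omega) u t hu htN ht1)
  have claim2 : ‖A * (starRingEnd ℂ) dB - (starRingEnd ℂ) B * dA‖
      ≤ 3 * Real.exp 4 * Real.exp 4 * t^(2*N-2) := by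
    rw [expand2]
    refine hpart _ fun j l hj hl => ?_
    rw [Finset.mem_range] at hj hl
    refine term_bound N j l hN t ht0 _ _ _
      (norm_K_le s hs N (N-1) j (Nat.sub_le N 1) (by omega))
      (le_trans (le_of_eq (RCLike.norm_conj _)) (norm_K_le s hs N N l (le_refl N) (by omega)))
      (E2_bound N j l hN (by omega) (by omega) y t htN ht1 hu hv hyt)
  -- combine
  have hre1 : (A*dB - B*dA).re ≤ 3 * Real.exp 4 * Real.exp 4 * t^(2*N-2) :=
    le_trans (Complex.re_le_norm _) (le_trans le_rfl claim1)
  have hre2 : (A * (starRingEnd ℂ) dB - (starRingEnd ℂ) B * dA).re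
      ≤ 3 * Real.exp 4 * Real.exp 4 * t^(2*N-2) :=
    le_trans (Complex.re_le_norm _) (le_trans le_rfl claim2)
  have hfin : ((A*dB - B*dA).re + (A * (starRingEnd ℂ) dB - (starRingEnd ℂ) B * dA).re)/2
      ≤ 3 * Real.exp 4 * Real.exp 4 * t^(2*N-2) := by linarith
  refine hfin.trans (le_of_eq ?_)
  have he8 : Real.exp 4 * Real.exp 4 = Real.exp 8 := by rw [← Real.exp_add]; norm_num
  rw [(by omega : 2*N-2 = 2*(N-1)), pow_mul, ht2, ← he8]; ring



lemma Gamma_shift (x : ℝ) (hx : 0 < x) (k : ℕ) :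
    Real.Gamma (x + k) = Real.Gamma x * ∏ i ∈ Finset.range k, (x + i) := by
  induction k with
  | zero => simp
  | succ k ih =>
    have hxk : x + k ≠ 0 := by positivity
    have : x + (k+1 : ℕ) = (x + k) + 1 := by push_cast; ring
    rw [this, Real.Gamma_add_one hxk, ih, Finset.prod_range_succ]
    ring

lemma Gamma_ratio (a : ℝ) (ha : 0 < a) :
    ∃ c : ℝ, 0 < c ∧ ∀ N : ℕ, 1 ≤ N →
      Real.Gamma ((N:ℝ) + a) ≤ c * Real.Gamma N * (N:ℝ) ^ a := by
  set k := ⌈a⌉₊ with hk_def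
  have hak : a ≤ k := Nat.le_ceil a
  have hk1 : 1 ≤ k := by
    rw [hk_def]; exact Nat.one_le_ceil_iff.mpr ha
  have hkpos : (0:ℝ) < k := by exact_mod_cast hk1
  refine ⟨((k:ℝ)+1) ^ a, Real.rpow_pos_of_pos (by positivity) a, fun N hN => ?_⟩
  have hNpos : (0:ℝ) < N := by exact_mod_cast hN
  have hN1 : (1:ℝ) ≤ N := by exact_mod_cast hN
  set θ : ℝ := a / k with hθ_def
  have hθpos : 0 < θ := div_pos ha hkpos
  have hθ1 : θ ≤ 1 := by rw [hθ_def, div_le_one hkpos]; exact hak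
  have hθk : θ * k = a := by rw [hθ_def]; field_simp
  -- convexity
  have hconv := Real.convexOn_log_Gamma.2 (Set.mem_Ioi.mpr hNpos)
    (Set.mem_Ioi.mpr (by positivity : (0:ℝ) < (N:ℝ) + k))
    (by linarith : (0:ℝ) ≤ 1 - θ) hθpos.le (by ring)
  have hcomb : (1-θ) • (N:ℝ) + θ • ((N:ℝ) + k) = (N:ℝ) + a := by
    simp only [smul_eq_mul]; rw [← hθk]; ring
  rw [hcomb] at hconv
  simp only [Function.comp_apply, smul_eq_mul] at hconv
  -- bound Gamma (N + k)
  have hGN : 0 < Real.Gamma N := Real.Gamma_pos_of_pos hNpos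
  have hprod : Real.Gamma ((N:ℝ) + k) ≤ Real.Gamma N * (((k:ℝ)+1) * N) ^ k := by
    rw [Gamma_shift (N:ℝ) hNpos k]
    have : ∏ i ∈ Finset.range k, ((N:ℝ) + i) ≤ ∏ _i ∈ Finset.range k, (((k:ℝ)+1) * N) := by
      refine Finset.prod_le_prod (fun i _ => by positivity) (fun i hi => ?_)
      rw [Finset.mem_range] at hi
      have hik : (i:ℝ) ≤ (k:ℝ) := by exact_mod_cast hi.le
      nlinarith
    rw [Finset.prod_const, Finset.card_range] at this
    exact mul_le_mul_of_nonneg_left this hGN.le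
  have hGNk : 0 < Real.Gamma ((N:ℝ) + k) := Real.Gamma_pos_of_pos (by positivity)
  have hlogk : Real.log (Real.Gamma ((N:ℝ) + k))
      ≤ Real.log (Real.Gamma N) + k * Real.log (((k:ℝ)+1) * N) := by
    calc Real.log (Real.Gamma ((N:ℝ) + k)) ≤ Real.log (Real.Gamma N * (((k:ℝ)+1) * N) ^ k) :=
          Real.log_le_log hGNk hprod
      _ = Real.log (Real.Gamma N) + k * Real.log (((k:ℝ)+1) * N) := by
          rw [Real.log_mul hGN.ne' (by positivity), Real.log_pow]
  have hlog : Real.log (Real.Gamma ((N:ℝ) + a))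
      ≤ Real.log (Real.Gamma N) + a * Real.log (((k:ℝ)+1) * N) := by
    calc Real.log (Real.Gamma ((N:ℝ) + a))
        ≤ (1-θ) * Real.log (Real.Gamma N) + θ * Real.log (Real.Gamma ((N:ℝ)+k)) := hconv
      _ ≤ (1-θ) * Real.log (Real.Gamma N)
          + θ * (Real.log (Real.Gamma N) + k * Real.log (((k:ℝ)+1) * N)) := by
          have := mul_le_mul_of_nonneg_left hlogk hθpos.le
          linarith
      _ = Real.log (Real.Gamma N) + (θ * k) * Real.log (((k:ℝ)+1) * N) := by ring
      _ = Real.log (Real.Gamma N) + a * Real.log (((k:ℝ)+1) * N) := by rw [hθk]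
  have hGNa : 0 < Real.Gamma ((N:ℝ) + a) := Real.Gamma_pos_of_pos (by positivity)
  have := Real.exp_le_exp.mpr hlog
  rw [Real.exp_log hGNa, Real.exp_add, Real.exp_log hGN] at this
  refine this.trans (le_of_eq ?_)
  rw [mul_comm a (Real.log (((k:ℝ)+1) * (N:ℝ))),
    ← Real.rpow_def_of_pos (by positivity : (0:ℝ) < ((k:ℝ)+1) * (N:ℝ)) a,
    Real.mul_rpow (by positivity) hNpos.le]
  ring

lemma gammaSq_pos (s : ℝ) (hs : 0 < s) (N : ℕ) (hN : 1 ≤ N) : 0 < gammaSq s N := by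
  have hNpos : (0:ℝ) < N := by exact_mod_cast hN
  have h1 : 0 < Real.Gamma (2*s + N + 1) := Real.Gamma_pos_of_pos (by positivity)
  have h2 : 0 < Real.Gamma (s + 1) := Real.Gamma_pos_of_pos (by linarith)
  have h3 : 0 < Real.Gamma (N:ℝ) := Real.Gamma_pos_of_pos hNpos
  have h4 : 0 < Real.Gamma (2*s + 1) := Real.Gamma_pos_of_pos (by linarith)
  have h5 : 0 < Real.Gamma (2*s + 2) := Real.Gamma_pos_of_pos (by linarith)
  have h6 : (0:ℝ) < (2:ℝ)^(2*s) := Real.rpow_pos_of_pos (by norm_num) _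
  have h7 := Real.pi_pos
  rw [gammaSq]
  positivity

lemma gammaSq_le (s : ℝ) (hs : 0 < s) :
    ∃ c : ℝ, 0 < c ∧ ∀ N : ℕ, 1 ≤ N → gammaSq s N ≤ c * (N:ℝ) ^ (2*s+1) := by
  obtain ⟨c0, hc0, hG⟩ := Gamma_ratio (2*s+1) (by linarith)
  have h2 : 0 < Real.Gamma (s + 1) := Real.Gamma_pos_of_pos (by linarith)
  have h4 : 0 < Real.Gamma (2*s + 1) := Real.Gamma_pos_of_pos (by linarith)
  have h5 : 0 < Real.Gamma (2*s + 2) := Real.Gamma_pos_of_pos (by linarith)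
  have h6 : (0:ℝ) < (2:ℝ)^(2*s) := Real.rpow_pos_of_pos (by norm_num) _
  have h7 := Real.pi_pos
  refine ⟨(2:ℝ)^(2*s) / Real.pi * Real.Gamma (s+1)^2 * c0 /
    (Real.Gamma (2*s+1) * Real.Gamma (2*s+2)), by positivity, fun N hN => ?_⟩
  have hNpos : (0:ℝ) < N := by exact_mod_cast hN
  have h3 : 0 < Real.Gamma (N:ℝ) := Real.Gamma_pos_of_pos hNpos
  have harg : 2*s + (N:ℝ) + 1 = (N:ℝ) + (2*s+1) := by ring
  calc gammaSq s N
      = (2:ℝ)^(2*s) / Real.pi * Real.Gamma (s+1)^2 / (Real.Gamma (N:ℝ) *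
          (Real.Gamma (2*s+1) * Real.Gamma (2*s+2))) * Real.Gamma ((N:ℝ) + (2*s+1)) := by
        rw [gammaSq, harg]; ring
    _ ≤ (2:ℝ)^(2*s) / Real.pi * Real.Gamma (s+1)^2 / (Real.Gamma (N:ℝ) *
          (Real.Gamma (2*s+1) * Real.Gamma (2*s+2))) * (c0 * Real.Gamma (N:ℝ) * (N:ℝ)^(2*s+1)) := by
        refine mul_le_mul_of_nonneg_left (hG N hN) (by positivity)
    _ = (2:ℝ)^(2*s) / Real.pi * Real.Gamma (s+1)^2 * c0 /
          (Real.Gamma (2*s+1) * Real.Gamma (2*s+2)) * (N:ℝ)^(2*s+1) := by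
        field_simp

end

noncomputable section

theorem stmt19 (s : ℝ) (hs : 0 < s) :
    ∃ C : ℝ, 0 < C ∧ ∀ N : ℕ, 1 ≤ N → ∀ x : ℝ, 1 < x →
      (N : ℝ) * rho s N ((N : ℝ) * x) ≤ C * x ^ (-2 * s - 2) := by
  obtain ⟨c0, hc0, hgam⟩ := gammaSq_le s hs
  refine ⟨3 * Real.exp 8 * c0, by positivity, fun N hN x hx => ?_⟩
  set y : ℝ := (N:ℝ) * x with hy_def
  have hNpos : (0:ℝ) < N := by exact_mod_cast hN
  have hN1 : (1:ℝ) ≤ N := by exact_mod_cast hN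
  have hx0 : (0:ℝ) < x := lt_trans one_pos hx
  have hyN : (N:ℝ) ≤ y := by rw [hy_def]; nlinarith
  have hy1 : (1:ℝ) ≤ y := le_trans hN1 hyN
  have hy0 : (0:ℝ) < y := by linarith
  have hD := bracket_bound s hs N hN y hyN
  have hgpos := gammaSq_pos s hs N hN
  have hphi : 0 < phi s N y := Real.rpow_pos_of_pos (by positivity) _
  have hcoef0 : (0:ℝ) ≤ (N:ℝ) * gammaSq s N :=
    mul_nonneg hNpos.le hgpos.le
  have h1 : (N:ℝ) * rho s N y
      ≤ 3 * Real.exp 8 * ((N:ℝ) * gammaSq s N) * (phi s N y * (1+y^2)^(N-1)) := by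
    have hD' := mul_le_mul_of_nonneg_left hD
      (mul_nonneg hcoef0 hphi.le :
        (0:ℝ) ≤ (N:ℝ) * gammaSq s N * phi s N y)
    calc (N:ℝ) * rho s N y
        = ((N:ℝ) * gammaSq s N * phi s N y) *
            (pJ s N (N-1) y * deriv (pJ s N N) y - pJ s N N y * deriv (pJ s N (N-1)) y) := by
          rw [rho]; ring
      _ ≤ ((N:ℝ) * gammaSq s N * phi s N y) * (3 * Real.exp 8 * (1+y^2)^(N-1)) := hD'
      _ = 3 * Real.exp 8 * ((N:ℝ) * gammaSq s N) * (phi s N y * (1+y^2)^(N-1)) := by ring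
  have hbase : (0:ℝ) < 1 + y^2 := by positivity
  have h2 : phi s N y * (1+y^2)^(N-1) = (1+y^2) ^ (-(s+1)) := by
    rw [phi, ← Real.rpow_natCast (1+y^2) (N-1), ← Real.rpow_add hbase]
    congr 1
    rw [Nat.cast_sub hN]
    push_cast
    ring
  have h3 : ((1+y^2):ℝ)^(-(s+1)) ≤ (y^2)^(-(s+1)) :=
    Real.rpow_le_rpow_of_nonpos (by positivity) (by linarith) (by linarith)
  have h4 : ((y^2):ℝ)^(-(s+1)) = (N:ℝ)^(2*(-(s+1))) * x^(-2*s-2) := by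
    rw [hy_def, mul_pow, Real.mul_rpow (by positivity) (by positivity)]
    congr 1
    · rw [← Real.rpow_natCast (N:ℝ) 2, ← Real.rpow_mul (Nat.cast_nonneg N)]
      norm_num
    · rw [← Real.rpow_natCast x 2, ← Real.rpow_mul hx0.le]
      congr 1
      push_cast
      ring
  have h5 : (N:ℝ) * gammaSq s N * (N:ℝ)^(2*(-(s+1))) ≤ c0 := by
    have e1 : (N:ℝ) * (N:ℝ)^(2*(-(s+1))) = (N:ℝ)^(1 + 2*(-(s+1))) := by
      rw [Real.rpow_add hNpos, Real.rpow_one]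
    calc (N:ℝ) * gammaSq s N * (N:ℝ)^(2*(-(s+1)))
        = gammaSq s N * ((N:ℝ) * (N:ℝ)^(2*(-(s+1)))) := by ring
      _ = gammaSq s N * (N:ℝ)^(1 + 2*(-(s+1))) := by rw [e1]
      _ ≤ (c0 * (N:ℝ)^(2*s+1)) * (N:ℝ)^(1 + 2*(-(s+1))) :=
          mul_le_mul_of_nonneg_right (hgam N hN) (by positivity)
      _ = c0 * (N:ℝ)^((2*s+1) + (1 + 2*(-(s+1)))) := by
          rw [mul_assoc, ← Real.rpow_add hNpos]
      _ = c0 := by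
          rw [(by ring : (2*s+1) + (1 + 2*(-(s+1))) = (0:ℝ)), Real.rpow_zero, mul_one]
  calc (N:ℝ) * rho s N y
      ≤ 3 * Real.exp 8 * ((N:ℝ) * gammaSq s N) * (phi s N y * (1+y^2)^(N-1)) := h1
    _ = 3 * Real.exp 8 * ((N:ℝ) * gammaSq s N) * ((1+y^2):ℝ)^(-(s+1)) := by rw [h2]
    _ ≤ 3 * Real.exp 8 * ((N:ℝ) * gammaSq s N) * ((y^2):ℝ)^(-(s+1)) :=
        mul_le_mul_of_nonneg_left h3 (by positivity)
    _ = 3 * Real.exp 8 * ((N:ℝ) * gammaSq s N * (N:ℝ)^(2*(-(s+1)))) * x^(-2*s-2) := by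
        rw [h4]; ring
    _ ≤ 3 * Real.exp 8 * c0 * x^(-2*s-2) :=
        mul_le_mul_of_nonneg_right (mul_le_mul_of_nonneg_left h5 (by positivity))
          (Real.rpow_nonneg hx0.le _)

end
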